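/- Let C₁ and C₂ be abelian categories with enough projectives in which every object has finite projective dimension (i.e. admits a projective resolution of finite length). Let E : C₁ ⥤ C₂ and F : C₂ ⥤ C₁ be exact functors which send projective objects to projective objects, and let E' : Proj(C₁) ⥤ Proj(C₂) and F' : Proj(C₂) ⥤ Proj(C₁) denote their restrictions to the full subcategories of projective objects. If the pair (E', F') is adjoint (E' is left adjoint to F'), then the pair (E, F) is adjoint (E is left adjoint to F). -/

import Mathlib

open CategoryTheory CategoryTheory.Limits

/-- An object `X` of an abelian category has finite projective dimension if it admits a
projective resolution of finite length. -/
def HasFiniteProjDim {C : Type*} [Category C] [Abelian C] (X : C) : Prop :=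
  ∃ (res : ProjectiveResolution X) (n : ℕ), ∀ i : ℕ, n < i → IsZero (res.complex.X i)

namespace Stmt10Aux

variable {C : Type*} [Category C] [Abelian C] [EnoughProjectives C]

/-- The chosen projective presentation epi. -/
noncomputable def pp (X : C) : Projective.over X ⟶ X := Projective.π X

instance (X : C) : Epi (pp X) := by
  unfold pp; infer_instance

/-- The syzygy map. -/
noncomputable def dd (X : C) : Projective.over (kernel (pp X)) ⟶ Projective.over X :=
  Projective.π (kernel (pp X)) ≫ kernel.ι (pp X)

lemma dd_comp_pp (X : C) : dd X ≫ pp X = 0 := by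
  simp [dd]

variable {D : Type*} [Category D] [Abelian D]

/-- Descend a morphism out of `G.obj (Projective.over X)` killing the syzygy to `G.obj X`,
for an exact functor `G`. -/
noncomputable def descend (G : C ⥤ D) [PreservesFiniteLimits G] [PreservesFiniteColimits G]
    (X : C) {Z : D} (g : G.obj (Projective.over X) ⟶ Z) (hg : G.map (dd X) ≫ g = 0) :
    G.obj X ⟶ Z := by
  haveI : Epi (G.map (pp X)) := G.map_epi _
  refine Abelian.epiDesc (G.map (pp X)) g ?_
  have h1 : G.map (kernel.ι (pp X)) ≫ g = 0 := by
    haveI : Epi (G.map (Projective.π (kernel (pp X)))) := G.map_epi _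
    rw [← cancel_epi (G.map (Projective.π (kernel (pp X)))), comp_zero,
      ← Category.assoc, ← G.map_comp]
    exact hg
  rw [← cancel_epi (kernelComparison (pp X) G), comp_zero, ← Category.assoc,
    kernelComparison_comp_ι]
  exact h1

lemma map_pp_descend (G : C ⥤ D) [PreservesFiniteLimits G] [PreservesFiniteColimits G]
    (X : C) {Z : D} (g : G.obj (Projective.over X) ⟶ Z) (hg : G.map (dd X) ≫ g = 0) :
    G.map (pp X) ≫ descend G X g hg = g := by
  haveI : Epi (G.map (pp X)) := G.map_epi _
  exact Abelian.comp_epiDesc _ _ _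

end Stmt10Aux

open Stmt10Aux

/-- If `C₁`, `C₂` are abelian categories with enough projectives in which every object
has finite projective dimension, `E : C₁ ⥤ C₂` and `F : C₂ ⥤ C₁` are exact functors
preserving projective objects, and the restrictions `E'`, `F'` of `E`, `F` to the full
subcategories of projective objects form an adjoint pair `(E', F')`, then `(E, F)` is an
adjoint pair. -/
theorem stmt10 {C₁ C₂ : Type*} [Category C₁] [Category C₂] [Abelian C₁] [Abelian C₂]
    [EnoughProjectives C₁] [EnoughProjectives C₂]
    (hdim₁ : ∀ X : C₁, HasFiniteProjDim X) (hdim₂ : ∀ Y : C₂, HasFiniteProjDim Y)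
    (E : C₁ ⥤ C₂) (F : C₂ ⥤ C₁)
    [PreservesFiniteLimits E] [PreservesFiniteColimits E]
    [PreservesFiniteLimits F] [PreservesFiniteColimits F]
    (hE : ∀ X : C₁, Projective X → Projective (E.obj X))
    (hF : ∀ Y : C₂, Projective Y → Projective (F.obj Y))
    (hadj : Nonempty
      (ObjectProperty.lift (fun Y : C₂ => Projective Y)
          (ObjectProperty.ι (fun X : C₁ => Projective X) ⋙ E)
          (fun X => hE X.obj X.property) ⊣
        ObjectProperty.lift (fun X : C₁ => Projective X)
          (ObjectProperty.ι (fun Y : C₂ => Projective Y) ⋙ F)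
          (fun Y => hF Y.obj Y.property))) :
    Nonempty (E ⊣ F) := by
  obtain ⟨A⟩ := hadj
  -- unit and counit of the restricted adjunction, seen in the ambient categories
  let uA : ∀ (P : C₁), Projective P → (P ⟶ F.obj (E.obj P)) :=
    fun P hP => (A.unit.app ⟨P, hP⟩).hom
  let cA : ∀ (Q : C₂), Projective Q → (E.obj (F.obj Q) ⟶ Q) :=
    fun Q hQ => (A.counit.app ⟨Q, hQ⟩).hom
  have uA_nat : ∀ {P P' : C₁} (hP : Projective P) (hP' : Projective P') (f : P ⟶ P'),
      f ≫ uA P' hP' = uA P hP ≫ F.map (E.map f) :=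
    fun {P P'} hP hP' f => congrArg (fun g => g.hom)
      (A.unit.naturality (X := ⟨P, hP⟩) (Y := ⟨P', hP'⟩) (ObjectProperty.homMk f))
  have cA_nat : ∀ {Q Q' : C₂} (hQ : Projective Q) (hQ' : Projective Q') (k : Q ⟶ Q'),
      E.map (F.map k) ≫ cA Q' hQ' = cA Q hQ ≫ k :=
    fun {Q Q'} hQ hQ' k => congrArg (fun g => g.hom)
      (A.counit.naturality (X := ⟨Q, hQ⟩) (Y := ⟨Q', hQ'⟩) (ObjectProperty.homMk k))
  have triA1 : ∀ (P : C₁) (hP : Projective P),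
      E.map (uA P hP) ≫ cA (E.obj P) (hE P hP) = 𝟙 (E.obj P) :=
    fun P hP => congrArg (fun g => g.hom) (A.left_triangle_components ⟨P, hP⟩)
  have triA2 : ∀ (Q : C₂) (hQ : Projective Q),
      uA (F.obj Q) (hF Q hQ) ≫ F.map (cA Q hQ) = 𝟙 (F.obj Q) :=
    fun Q hQ => congrArg (fun g => g.hom) (A.right_triangle_components ⟨Q, hQ⟩)
  -- unit
  have hu0 : ∀ X : C₁, (𝟭 C₁).map (dd X) ≫
      (uA (Projective.over X) (Projective.projective_over X) ≫ F.map (E.map (pp X))) = 0 := by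
    intro X
    rw [Functor.id_map, ← Category.assoc,
      uA_nat (Projective.projective_over _) (Projective.projective_over X) (dd X),
      Category.assoc, ← F.map_comp, ← E.map_comp, dd_comp_pp, E.map_zero, F.map_zero, comp_zero]
  let η : ∀ X : C₁, X ⟶ F.obj (E.obj X) := fun X => descend (𝟭 C₁) X _ (hu0 X)
  have hη : ∀ X : C₁, pp X ≫ η X =
      uA (Projective.over X) (Projective.projective_over X) ≫ F.map (E.map (pp X)) :=
    fun X => map_pp_descend (𝟭 C₁) X _ (hu0 X)
  -- counit
  haveI : PreservesFiniteLimits (F ⋙ E) := comp_preservesFiniteLimits F E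
  haveI : PreservesFiniteColimits (F ⋙ E) := comp_preservesFiniteColimits F E
  have hc0 : ∀ Y : C₂, (F ⋙ E).map (dd Y) ≫
      (cA (Projective.over Y) (Projective.projective_over Y) ≫ pp Y) = 0 := by
    intro Y
    rw [Functor.comp_map, ← Category.assoc,
      cA_nat (Projective.projective_over _) (Projective.projective_over Y) (dd Y),
      Category.assoc, dd_comp_pp, comp_zero]
  let ε : ∀ Y : C₂, E.obj (F.obj Y) ⟶ Y := fun Y => descend (F ⋙ E) Y _ (hc0 Y)
  have hε : ∀ Y : C₂, E.map (F.map (pp Y)) ≫ ε Y =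
      cA (Projective.over Y) (Projective.projective_over Y) ≫ pp Y :=
    fun Y => map_pp_descend (F ⋙ E) Y _ (hc0 Y)
  -- naturality of the unit
  have η_nat : ∀ {X X' : C₁} (f : X ⟶ X'), f ≫ η X' = η X ≫ F.map (E.map f) := by
    intro X X' f
    rw [← cancel_epi (pp X)]
    have hf : Projective.factorThru (pp X ≫ f) (pp X') ≫ pp X' = pp X ≫ f :=
      Projective.factorThru_comp _ _
    set fac := Projective.factorThru (pp X ≫ f) (pp X') with hfac
    slice_lhs 1 2 => rw [← hf]
    slice_lhs 2 3 => rw [hη X']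
    slice_lhs 1 2 =>
      rw [uA_nat (Projective.projective_over X) (Projective.projective_over X') fac]
    slice_lhs 2 3 => rw [← F.map_comp, ← E.map_comp, hf, E.map_comp, F.map_comp]
    slice_rhs 1 2 => rw [hη X]
    simp only [Category.assoc]
  -- naturality of the counit
  have ε_nat : ∀ {Y Y' : C₂} (k : Y ⟶ Y'), E.map (F.map k) ≫ ε Y' = ε Y ≫ k := by
    intro Y Y' k
    haveI : Epi (E.map (F.map (pp Y))) := by
      haveI : Epi (F.map (pp Y)) := F.map_epi _
      exact E.map_epi _
    rw [← cancel_epi (E.map (F.map (pp Y)))]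
    have hk : Projective.factorThru (pp Y ≫ k) (pp Y') ≫ pp Y' = pp Y ≫ k :=
      Projective.factorThru_comp _ _
    set fac := Projective.factorThru (pp Y ≫ k) (pp Y') with hfac
    slice_lhs 1 2 => rw [← E.map_comp, ← F.map_comp, ← hk, F.map_comp, E.map_comp]
    slice_lhs 2 3 => rw [hε Y']
    slice_lhs 1 2 =>
      rw [cA_nat (Projective.projective_over Y) (Projective.projective_over Y') fac]
    slice_lhs 2 3 => rw [hk]
    slice_rhs 1 2 => rw [hε Y]
    simp only [Category.assoc]
  -- the counit agrees with the restricted counit on projectives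
  have ε_proj : ∀ (Q : C₂) (hQ : Projective Q), ε Q = cA Q hQ := by
    intro Q hQ
    haveI : Epi (E.map (F.map (pp Q))) := by
      haveI : Epi (F.map (pp Q)) := F.map_epi _
      exact E.map_epi _
    rw [← cancel_epi (E.map (F.map (pp Q))), hε Q,
      cA_nat (Projective.projective_over Q) hQ (pp Q)]
  -- assemble
  refine ⟨{
      unit := { app := η, naturality := fun X X' f => η_nat f }
      counit := { app := ε, naturality := fun Y Y' k => ε_nat k }
      left_triangle_components := ?_
      right_triangle_components := ?_ }⟩
  · intro X
    haveI : Epi (E.map (pp X)) := E.map_epi _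
    rw [← cancel_epi (E.map (pp X)), Category.comp_id]
    slice_lhs 1 2 => rw [← E.map_comp, hη X, E.map_comp]
    slice_lhs 2 3 => rw [ε_nat (E.map (pp X))]
    rw [ε_proj (E.obj (Projective.over X)) (hE _ (Projective.projective_over X))]
    slice_lhs 1 2 => rw [triA1 (Projective.over X) (Projective.projective_over X)]
    simp
  · intro Y
    rw [← cancel_epi (pp (F.obj Y)), Category.comp_id]
    slice_lhs 1 2 => rw [hη (F.obj Y)]
    haveI : Epi (F.map (pp Y)) := F.map_epi _
    have hv : Projective.factorThru (pp (F.obj Y)) (F.map (pp Y)) ≫ F.map (pp Y)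
        = pp (F.obj Y) := Projective.factorThru_comp _ _
    set v := Projective.factorThru (pp (F.obj Y)) (F.map (pp Y)) with hvdef
    have h1 : E.map (pp (F.obj Y)) ≫ ε Y
        = E.map v ≫ cA (Projective.over Y) (Projective.projective_over Y) ≫ pp Y := by
      rw [← hv, E.map_comp, Category.assoc, hε Y]
    slice_lhs 2 3 => rw [← F.map_comp, h1, F.map_comp, F.map_comp]
    slice_lhs 1 2 =>
      rw [← uA_nat (Projective.projective_over (F.obj Y))
        (hF _ (Projective.projective_over Y)) v]
    slice_lhs 2 3 => rw [triA2 (Projective.over Y) (Projective.projective_over Y)]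
    simp only [Category.id_comp, Category.comp_id, Category.assoc]
    exact hv
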